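/- In the homogeneous multi-agent ski-rental problem, suppose K := G/M is a positive integer and let c := 1/(1 − (1 − 1/K)^K). Define p_t := c · (1/K) · (1 − 1/K)^{K−t} for t ∈ {1, …, K}. Then (i) Σ_{t=1}^K p_t = 1, so (p_t) is a probability distribution over thresholds; and (ii) for every positive integer N, the expected cost Σ_{t=1}^K p_t · cost(t, N) equals c · opt(N) = c · min(M·N, G). In particular the randomized policy that samples its group-buy threshold from (p_t) has competitive ratio exactly c = 1/(1 − (1 − M/G)^{G/M}). -/

import Mathlib

/-- Total cost of the group-buy threshold-`t` policy on the homogeneous instance `N`. -/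
def homCostG (M G t N : ℕ) : ℕ := if N < t then M * N else M * (t - 1) + G

/-- Offline optimal cost on the homogeneous instance `N`. -/
def homOpt (M G N : ℕ) : ℕ := min (M * N) G

/-- For `K = G/M` a positive integer, the distribution `p_t = c·(1/K)·(1-1/K)^{K-t}`
on `{1, …, K}` is a probability distribution, and the randomized policy sampling its
group-buy threshold from it has expected cost exactly `c · opt(N)` on every instance,
i.e. competitive ratio exactly `c = 1/(1-(1-M/G)^{G/M})`. -/
theorem stmt8 (M B G K : ℕ) (hM : 2 ≤ M) (hB : 1 ≤ B)
    (hBG : B < G) (hGMB : G < M * B) (hK : 0 < K) (hGK : G = M * K)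
    (c : ℝ) (hc : c = 1 / (1 - (1 - 1 / (K : ℝ)) ^ K))
    (p : ℕ → ℝ) (hp : ∀ t, p t = c * (1 / (K : ℝ)) * (1 - 1 / (K : ℝ)) ^ (K - t)) :
    (∑ t ∈ Finset.Icc 1 K, p t = 1) ∧
    (∀ N : ℕ, 0 < N →
      ∑ t ∈ Finset.Icc 1 K, p t * (homCostG M G t N : ℝ) = c * (homOpt M G N : ℝ)) ∧
    c = 1 / (1 - (1 - (M : ℝ) / (G : ℝ)) ^ K) := by
  have hK0 : (K:ℝ) ≠ 0 := Nat.cast_ne_zero.mpr hK.ne'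
  have hKpos : (0:ℝ) < K := Nat.cast_pos.mpr hK
  set q : ℝ := 1 - 1/(K:ℝ) with hqdef
  have hq0 : 0 ≤ q := by
    have h1 : 1/(K:ℝ) ≤ 1 := by
      rw [div_le_one hKpos]; exact_mod_cast hK
    simpa [hqdef] using sub_nonneg.mpr h1
  have hq1 : q < 1 := by
    have : 0 < 1/(K:ℝ) := by positivity
    simpa [hqdef] using sub_lt_self 1 this
  have hqne : q ≠ 1 := ne_of_lt hq1
  have hqK : q^K < 1 := pow_lt_one₀ hq0 hq1 hK.ne'
  have hden : 1 - q^K ≠ 0 := by linarith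
  have hc1 : c * (1 - q^K) = 1 := by rw [hc]; field_simp
  have hqm1 : q - 1 = -(1/(K:ℝ)) := by rw [hqdef]; ring
  -- tail sum lemma
  have tail : ∀ a : ℕ, ∑ t ∈ Finset.Ioc a K, p t = c * (1 - q^(K-a)) := by
    intro a
    have h1 : ∑ t ∈ Finset.Ioc a K, p t
        = c * (1/(K:ℝ)) * ∑ t ∈ Finset.Ioc a K, q^(K-t) := by
      rw [Finset.mul_sum]; exact Finset.sum_congr rfl (fun t _ => by rw [hp t])
    have h2 : ∑ t ∈ Finset.Ioc a K, q^(K-t) = ∑ i ∈ Finset.range (K-a), q^i := by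
      rw [← Finset.Icc_add_one_left_eq_Ioc, ← Finset.Ico_add_one_right_eq_Icc, Finset.sum_Ico_eq_sum_range]
      have hn : K + 1 - (a+1) = K - a := by omega
      rw [hn, ← Finset.sum_range_reflect]
      apply Finset.sum_congr rfl
      intro i hi
      simp only [Finset.mem_range] at hi
      congr 1
      omega
    rw [h1, h2, geom_sum_eq hqne, hqm1, div_neg, div_div_eq_mul_div, div_one]
    have hKK : (K:ℝ) * (1/(K:ℝ)) = 1 := by field_simp
    linear_combination (c*(1 - q^(K-a)))*hKK
  -- partial sum lemma
  have hA : ∀ m, m ≤ K →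
      ∑ t ∈ Finset.Ioc 0 m, p t * ((M*(t-1)+G : ℕ) : ℝ) = c * M * m * q^(K-m) := by
    intro m
    induction m with
    | zero => intro _; simp
    | succ n ih =>
      intro hle
      have hn : n ≤ K := by omega
      rw [Finset.sum_Ioc_succ_top (Nat.zero_le n), ih hn, hp (n+1)]
      have hcast : ((M*(n+1-1)+G : ℕ) : ℝ) = M*n + M*K := by
        rw [hGK]; push_cast [Nat.add_sub_cancel]; ring
      rw [hcast]
      have he : K - n = (K - (n+1)) + 1 := by omega
      rw [he, pow_succ]
      rw [hqdef]
      push_cast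
      field_simp
      ring
  refine ⟨?_, ?_, ?_⟩
  · rw [show (1:ℕ) = 0 + 1 from rfl, Finset.Icc_add_one_left_eq_Ioc, tail 0]
    simpa using hc1
  · intro N hN
    rw [show (1:ℕ) = 0 + 1 from rfl, Finset.Icc_add_one_left_eq_Ioc]
    by_cases hNK : K ≤ N
    · have hcost : ∀ t ∈ Finset.Ioc 0 K, p t * (homCostG M G t N : ℝ)
          = p t * ((M*(t-1)+G : ℕ):ℝ) := by
        intro t ht
        simp only [Finset.mem_Ioc] at ht
        have h : ¬ N < t := by omega
        simp [homCostG, h]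
      rw [Finset.sum_congr rfl hcost, hA K le_rfl]
      have hopt : homOpt M G N = G := by
        have : G ≤ M * N := by
          rw [hGK]; exact Nat.mul_le_mul_left M hNK
        simp only [homOpt]
        omega
      rw [hopt, hGK, Nat.sub_self, pow_zero]
      push_cast
      ring
    · push_neg at hNK
      rw [← Finset.sum_Ioc_consecutive _ (Nat.zero_le N) (le_of_lt hNK)]
      have h1 : ∑ t ∈ Finset.Ioc 0 N, p t * (homCostG M G t N : ℝ)
          = c * M * N * q^(K-N) := by
        rw [← hA N (le_of_lt hNK)]
        apply Finset.sum_congr rfl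
        intro t ht
        simp only [Finset.mem_Ioc] at ht
        have h : ¬ N < t := by omega
        simp [homCostG, h]
      have h2 : ∑ t ∈ Finset.Ioc N K, p t * (homCostG M G t N : ℝ)
          = c * (1 - q^(K-N)) * (M*N) := by
        calc ∑ t ∈ Finset.Ioc N K, p t * (homCostG M G t N : ℝ)
            = ∑ t ∈ Finset.Ioc N K, p t * ((M:ℝ)*N) := by
              apply Finset.sum_congr rfl
              intro t ht
              simp only [Finset.mem_Ioc] at ht
              simp [homCostG, ht.1]
          _ = (∑ t ∈ Finset.Ioc N K, p t) * ((M:ℝ)*N) := by rw [Finset.sum_mul]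
          _ = c * (1 - q^(K-N)) * (M*N) := by rw [tail N]
      rw [h1, h2]
      have hopt : homOpt M G N = M * N := by
        have : M*N ≤ G := by rw [hGK]; exact Nat.mul_le_mul_left M (le_of_lt hNK)
        simp only [homOpt]
        omega
      rw [hopt]
      push_cast
      ring
  · have hM0 : (M:ℝ) ≠ 0 := Nat.cast_ne_zero.mpr (by omega)
    have hMG : (M:ℝ)/(G:ℝ) = 1/(K:ℝ) := by
      rw [hGK]; push_cast; field_simp
    rw [hc, hMG]
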